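/- The properties S₁(Ω,T*) and Sfin(Ω,T*) are closed under taking finite powers: if a set of real numbers X satisfies S₁(Ω,T*) (respectively, Sfin(Ω,T*)), then for each k ∈ ℕ the power X^k, equipped with the product topology, satisfies S₁(Ω,T*) (respectively, Sfin(Ω,T*)), where now Ω and T* denote the collections of countable open ω-covers and τ*-covers of X^k. -/

import Mathlib

open Set

namespace TauCoverPaper

/-- `a ⊆* b`: `a \ b` is finite. -/
def AlmostSubset (a b : Set ℕ) : Prop := (a \ b).Finite

/-- `Y` is linearly quasiordered by `⊆*`. -/
def LinQuasi (Y : Set (Set ℕ)) : Prop :=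
  ∀ a ∈ Y, ∀ b ∈ Y, AlmostSubset a b ∨ AlmostSubset b a

/-- `a` is a pseudo-intersection of the family `Y`. -/
def PseudoIntersection (a : Set ℕ) (Y : Set (Set ℕ)) : Prop :=
  a.Infinite ∧ ∀ b ∈ Y, AlmostSubset a b

/-- `Y` is centered: every nonempty finite subfamily has infinite intersection. -/
def Centered (Y : Set (Set ℕ)) : Prop :=
  ∀ F : Set (Set ℕ), F ⊆ Y → F.Finite → F.Nonempty → (⋂₀ F).Infinite

/-- A tower: a family of infinite subsets of `ℕ`, linearly quasiordered by `⊆*`,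
with no pseudo-intersection. -/
def IsTower (Y : Set (Set ℕ)) : Prop :=
  (∀ a ∈ Y, a.Infinite) ∧ LinQuasi Y ∧ ¬ ∃ a, PseudoIntersection a Y

variable {α : Type}

/-- A cover of the space `α`: the union is everything, and the whole space is
not a member. -/
def IsCover (𝒰 : Set (Set α)) : Prop := ⋃₀ 𝒰 = univ ∧ univ ∉ 𝒰

/-- A large cover: each point belongs to infinitely many members. -/
def IsLargeCover (𝒰 : Set (Set α)) : Prop :=
  IsCover 𝒰 ∧ ∀ x : α, {U ∈ 𝒰 | x ∈ U}.Infinite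

/-- An ω-cover: each finite set is contained in some member. -/
def IsOmegaCover (𝒰 : Set (Set α)) : Prop :=
  IsCover 𝒰 ∧ ∀ F : Set α, F.Finite → ∃ U ∈ 𝒰, F ⊆ U

/-- A γ-cover: infinite, and each point belongs to all but finitely many members. -/
def IsGammaCover (𝒰 : Set (Set α)) : Prop :=
  IsCover 𝒰 ∧ 𝒰.Infinite ∧ ∀ x : α, {U ∈ 𝒰 | x ∉ U}.Finite

/-- A τ-cover: a large cover such that for all `x, y`, one of the sets
`{U : x ∈ U, y ∉ U}`, `{U : y ∈ U, x ∉ U}` is finite. -/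
def IsTauCover (𝒰 : Set (Set α)) : Prop :=
  IsLargeCover 𝒰 ∧ ∀ x y : α,
    {U ∈ 𝒰 | x ∈ U ∧ y ∉ U}.Finite ∨ {U ∈ 𝒰 | y ∈ U ∧ x ∉ U}.Finite

/-- A τ*-cover: a large, countably infinite cover which, enumerated bijectively
as `⟨Uₙ⟩`, admits for each point `y` an infinite `r y ⊆ {n | y ∈ Uₙ}` such that
the family `{r y}` is linearly quasiordered by `⊆*`. -/
def IsTauStarCover (𝒰 : Set (Set α)) : Prop :=
  IsLargeCover 𝒰 ∧
  ∃ U : ℕ → Set α, Function.Injective U ∧ Set.range U = 𝒰 ∧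
    ∃ r : α → Set ℕ,
      (∀ y : α, (r y).Infinite ∧ r y ⊆ {n | y ∈ U n}) ∧
      (∀ y z : α, AlmostSubset (r y) (r z) ∨ AlmostSubset (r z) (r y))

/-- Ω : countable open ω-covers. -/
def OpenOmega (α : Type) [TopologicalSpace α] : Set (Set (Set α)) :=
  {𝒰 | 𝒰.Countable ∧ (∀ U ∈ 𝒰, IsOpen U) ∧ IsOmegaCover 𝒰}

/-- Γ : countable open γ-covers. -/
def OpenGamma (α : Type) [TopologicalSpace α] : Set (Set (Set α)) :=
  {𝒰 | 𝒰.Countable ∧ (∀ U ∈ 𝒰, IsOpen U) ∧ IsGammaCover 𝒰}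

/-- T : countable open τ-covers. -/
def OpenTau (α : Type) [TopologicalSpace α] : Set (Set (Set α)) :=
  {𝒰 | 𝒰.Countable ∧ (∀ U ∈ 𝒰, IsOpen U) ∧ IsTauCover 𝒰}

/-- T* : countable open τ*-covers. -/
def OpenTauStar (α : Type) [TopologicalSpace α] : Set (Set (Set α)) :=
  {𝒰 | 𝒰.Countable ∧ (∀ U ∈ 𝒰, IsOpen U) ∧ IsTauStarCover 𝒰}

/-- B_Ω : countable Borel ω-covers. -/
def BorelOmega (α : Type) [MeasurableSpace α] : Set (Set (Set α)) :=
  {𝒰 | 𝒰.Countable ∧ (∀ U ∈ 𝒰, MeasurableSet U) ∧ IsOmegaCover 𝒰}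

/-- B_Γ : countable Borel γ-covers. -/
def BorelGamma (α : Type) [MeasurableSpace α] : Set (Set (Set α)) :=
  {𝒰 | 𝒰.Countable ∧ (∀ U ∈ 𝒰, MeasurableSet U) ∧ IsGammaCover 𝒰}

/-- B_T : countable Borel τ-covers. -/
def BorelTau (α : Type) [MeasurableSpace α] : Set (Set (Set α)) :=
  {𝒰 | 𝒰.Countable ∧ (∀ U ∈ 𝒰, MeasurableSet U) ∧ IsTauCover 𝒰}

/-- The selection principle S₁(𝔘,𝔙). -/
def S1 (𝔘 𝔙 : Set (Set (Set α))) : Prop :=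
  ∀ 𝒰 : ℕ → Set (Set α), (∀ n, 𝒰 n ∈ 𝔘) →
    ∃ V : ℕ → Set α, (∀ n, V n ∈ 𝒰 n) ∧ Set.range V ∈ 𝔙

/-- The selection principle Sfin(𝔘,𝔙). -/
def Sfin (𝔘 𝔙 : Set (Set (Set α))) : Prop :=
  ∀ 𝒰 : ℕ → Set (Set α), (∀ n, 𝒰 n ∈ 𝔘) →
    ∃ F : ℕ → Set (Set α), (∀ n, (F n).Finite ∧ F n ⊆ 𝒰 n) ∧ (⋃ n, F n) ∈ 𝔙

/-- The selection principle Ufin(𝔘,𝔙). -/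
def Ufin (𝔘 𝔙 : Set (Set (Set α))) : Prop :=
  ∀ 𝒰 : ℕ → Set (Set α), (∀ n, 𝒰 n ∈ 𝔘) →
    (∀ n, ¬ ∃ F : Set (Set α), F ⊆ 𝒰 n ∧ F.Finite ∧ ⋃₀ F = univ) →
    ∃ F : ℕ → Set (Set α), (∀ n, (F n).Finite ∧ F n ⊆ 𝒰 n) ∧
      Set.range (fun n => ⋃₀ (F n)) ∈ 𝔙

/-- binom(𝔘,𝔙): each member of 𝔘 contains a subfamily belonging to 𝔙. -/
def Binom (𝔘 𝔙 : Set (Set (Set α))) : Prop :=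
  ∀ 𝒰 ∈ 𝔘, ∃ 𝒱 ⊆ 𝒰, 𝒱 ∈ 𝔙

/-- Borel measurability of a map into `P(ℕ)` (identified with the Cantor
space via characteristic functions): each coordinate is measurable. -/
def BorelMeasSets {β : Type} [MeasurableSpace β] (f : β → Set ℕ) : Prop :=
  ∀ n : ℕ, MeasurableSet {x | n ∈ f x}

/-- The excluded middle property for a family `Y ⊆ ℕ^ℕ`. -/
def ExcludedMiddleProp (Y : Set (ℕ → ℕ)) : Prop :=
  ∃ g : ℕ → ℕ,
    (∀ f ∈ Y, {n | f n < g n}.Infinite) ∧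
    ∀ f ∈ Y, ∀ h ∈ Y,
      {n | f n < g n ∧ g n ≤ h n}.Finite ∨ {n | h n < g n ∧ g n ≤ f n}.Finite

/-- non(J): the minimal cardinality of a set of reals not satisfying `J`. -/
noncomputable def nonCard (J : Set ℝ → Prop) : Cardinal :=
  sInf {c : Cardinal | ∃ X : Set ℝ, ¬ J X ∧ Cardinal.mk ↥X = c}

/-- add(J): the minimal cardinality of a family of sets of reals, each
satisfying `J`, whose union does not satisfy `J`. -/
noncomputable def addCard (J : Set ℝ → Prop) : Cardinal :=
  sInf {c : Cardinal | ∃ 𝔉 : Set (Set ℝ),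
    (∀ A ∈ 𝔉, J A) ∧ ¬ J (⋃₀ 𝔉) ∧ Cardinal.mk ↥𝔉 = c}

/-- 𝔱 : the minimal cardinality of a tower. -/
noncomputable def towerCard : Cardinal :=
  sInf {c : Cardinal | ∃ Y : Set (Set ℕ), IsTower Y ∧ Cardinal.mk ↥Y = c}

variable {β : Type}

lemma AS_refl (a : Set ℕ) : AlmostSubset a a := by simp [AlmostSubset]

lemma AS_trans {a b c : Set ℕ} (h1 : AlmostSubset a b) (h2 : AlmostSubset b c) :
    AlmostSubset a c := by
  have hsub : a \ c ⊆ (a \ b) ∪ (b \ c) := by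
    intro x hx
    by_cases hb : x ∈ b
    · exact Or.inr ⟨hb, hx.2⟩
    · exact Or.inl ⟨hx.1, hb⟩
  exact (h1.union h2).subset hsub

lemma AS_image {σ : ℕ → ℕ} {a b : Set ℕ} (h : AlmostSubset a b) :
    AlmostSubset (σ '' a) (σ '' b) := by
  have : σ '' a \ σ '' b ⊆ σ '' (a \ b) := by
    rintro x ⟨⟨n, hn, rfl⟩, hx2⟩
    exact ⟨n, ⟨hn, fun hnb => hx2 ⟨n, hnb, rfl⟩⟩, rfl⟩
  exact (h.image σ).subset this

lemma omega_infinite {𝒰 : Set (Set α)} (h : IsOmegaCover 𝒰) {F : Set α} (hF : F.Finite) :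
    {W ∈ 𝒰 | F ⊆ W}.Infinite := by
  by_contra hfin
  rw [Set.not_infinite] at hfin
  set S := {W ∈ 𝒰 | F ⊆ W} with hS
  have hz : ∀ W : ↥S, ∃ x, x ∉ (W : Set α) := by
    rintro ⟨W, hW, -⟩
    have : W ≠ univ := fun hWu => h.1.2 (hWu ▸ hW)
    exact (Set.ne_univ_iff_exists_notMem W).1 this
  choose g hg using hz
  haveI : Finite ↥S := hfin.to_subtype
  have hF' : (F ∪ Set.range g).Finite := hF.union (Set.finite_range g)
  obtain ⟨W, hW, hFW⟩ := h.2 _ hF'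
  have hWS : W ∈ S := ⟨hW, fun x hx => hFW (Or.inl hx)⟩
  exact hg ⟨W, hWS⟩ (hFW (Or.inr ⟨⟨W, hWS⟩, rfl⟩))

lemma omega_large {𝒰 : Set (Set α)} (h : IsOmegaCover 𝒰) : IsLargeCover 𝒰 := by
  refine ⟨h.1, fun x => ?_⟩
  have := omega_infinite h (Set.finite_singleton x)
  exact this.mono (fun W hW => ⟨hW.1, hW.2 rfl⟩)

lemma omega_inf {𝒰 : Set (Set α)} (h : IsOmegaCover 𝒰) : 𝒰.Infinite := by
  have := omega_infinite h (Set.finite_empty (α := α))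
  exact this.mono (fun W hW => hW.1)

lemma chain_min [DecidableEq β] {f : β → Set ℕ}
    (lin : ∀ a b, AlmostSubset (f a) (f b) ∨ AlmostSubset (f b) (f a)) :
    ∀ s : Finset β, s.Nonempty → ∃ a ∈ s, ∀ b ∈ s, AlmostSubset (f a) (f b) := by
  intro s
  induction s using Finset.induction_on with
  | empty => intro hs; simp at hs
  | insert x s hx ih =>
    intro _
    rcases s.eq_empty_or_nonempty with rfl | hsne
    · exact ⟨x, Finset.mem_insert_self _ _, by
        intro b hb
        rw [Finset.mem_insert] at hb
        rcases hb with rfl | hb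
        · exact AS_refl _
        · simp at hb⟩
    · obtain ⟨a, ha, hmin⟩ := ih hsne
      rcases lin x a with hc | hc
      · refine ⟨x, Finset.mem_insert_self _ _, fun b hb => ?_⟩
        rw [Finset.mem_insert] at hb
        rcases hb with rfl | hb
        · exact AS_refl _
        · exact AS_trans hc (hmin b hb)
      · refine ⟨a, Finset.mem_insert_of_mem ha, fun b hb => ?_⟩
        rw [Finset.mem_insert] at hb
        rcases hb with rfl | hb
        · exact hc
        · exact hmin b hb

lemma fto_image_infinite {σ : ℕ → ℕ} {s : Set ℕ} (hs : s.Infinite)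
    (hf : ∀ p, {n | σ n = p}.Finite) : (σ '' s).Infinite := by
  by_contra hfin
  rw [Set.not_infinite] at hfin
  have : s ⊆ ⋃ p ∈ σ '' s, {n | σ n = p} := by
    intro n hn
    exact Set.mem_biUnion ⟨n, hn, rfl⟩ rfl
  exact hs ((hfin.biUnion (fun p _ => hf p)).subset this)

lemma exists_inj_enum {s : Set β} (hc : s.Countable) (hi : s.Infinite) :
    ∃ T : ℕ → β, Function.Injective T ∧ Set.range T = s := by
  haveI : Countable ↥s := hc.to_subtype
  haveI : Infinite ↥s := hi.to_subtype
  obtain ⟨e⟩ := nonempty_equiv_of_countable (α := ℕ) (β := ↥s)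
  refine ⟨fun n => (e n : β), fun n m hnm => e.injective (Subtype.ext hnm), ?_⟩
  ext x
  constructor
  · rintro ⟨n, rfl⟩; exact (e n).2
  · intro hx; exact ⟨e.symm ⟨x, hx⟩, by simp⟩

/-- τ*-covers are ω-covers -/
lemma tauStar_omega {𝒰 : Set (Set α)} (h : IsTauStarCover 𝒰) : IsOmegaCover 𝒰 := by
  classical
  obtain ⟨hlarge, U, hUinj, hUrange, r, hr1, hr2⟩ := h
  refine ⟨hlarge.1, fun F hF => ?_⟩
  rcases F.eq_empty_or_nonempty with rfl | hFne
  · exact ⟨U 0, hUrange ▸ ⟨0, rfl⟩, empty_subset _⟩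
  · obtain ⟨a, haF, hmin⟩ := chain_min (f := r) hr2 hF.toFinset
      (by rwa [Set.Finite.toFinset_nonempty])
    have hfin : (⋃ b ∈ hF.toFinset, (r a \ r b)).Finite :=
      Set.Finite.biUnion (hF.toFinset : Finset α).finite_toSet (fun b hb => hmin b hb)
    obtain ⟨n, hn⟩ := ((hr1 a).1.diff hfin).nonempty
    refine ⟨U n, hUrange ▸ ⟨n, rfl⟩, fun b hb => ?_⟩
    have hbF : b ∈ hF.toFinset := hF.mem_toFinset.2 hb
    have hnb : n ∈ r b := by
      by_contra hnb
      exact hn.2 (Set.mem_biUnion hbF ⟨hn.1, hnb⟩)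
    exact (hr1 b).2 hnb

/-- k-th power of a set -/
def powSet (k : ℕ) (U : Set β) : Set (Fin k → β) := {f | ∀ i, f i ∈ U}

lemma powSet_univ (k : ℕ) : powSet k (univ : Set β) = univ := by
  ext f; simp [powSet]

lemma powSet_finite {k : ℕ} {F : Set β} (hF : F.Finite) : (powSet k F).Finite := by
  have : powSet k F = Set.pi univ (fun _ => F) := by
    ext f; simp [powSet, Set.mem_pi]
  rw [this]
  exact Set.Finite.pi (fun _ => hF)

/-- finite unions of finite intersections of basis members -/
def basicUnions (B : Set (Set β)) : Set (Set β) :=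
  {U | ∃ S : Set (Set β), S.Finite ∧ (∀ u ∈ S, ∃ T : Set (Set β), T.Finite ∧ T ⊆ B ∧ u = ⋂₀ T)
    ∧ U = ⋃₀ S}

lemma basicUnions_countable {B : Set (Set β)} (hB : B.Countable) :
    (basicUnions B).Countable := by
  have h0 : {T : Set (Set β) | T.Finite ∧ T ⊆ B}.Countable :=
    Set.countable_setOf_finite_subset hB
  have h1 : ((fun T : Set (Set β) => ⋂₀ T) '' {T | T.Finite ∧ T ⊆ B}).Countable := h0.image _
  have h2 : {S : Set (Set β) | S.Finite ∧ S ⊆ (fun T : Set (Set β) => ⋂₀ T) '' {T | T.Finite ∧ T ⊆ B}}.Countable :=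
    Set.countable_setOf_finite_subset h1
  refine (h2.image (fun S : Set (Set β) => ⋃₀ S)).mono ?_
  rintro U ⟨S, hSfin, hSmem, rfl⟩
  exact ⟨S, ⟨hSfin, fun u hu => by
    obtain ⟨T, hT1, hT2, rfl⟩ := hSmem u hu
    exact ⟨T, ⟨hT1, hT2⟩, rfl⟩⟩, rfl⟩

lemma basicUnions_open [TopologicalSpace β] {B : Set (Set β)} (hB : ∀ b ∈ B, IsOpen b)
    {U : Set β} (hU : U ∈ basicUnions B) : IsOpen U := by
  obtain ⟨S, _, hSmem, rfl⟩ := hU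
  apply isOpen_sUnion
  intro u hu
  obtain ⟨T, hT1, hT2, rfl⟩ := hSmem u hu
  exact Set.Finite.isOpen_sInter hT1 (fun t ht => hB t (hT2 ht))



/-- finite tube lemma with basis refinement -/
lemma tube {γ : Type} [TopologicalSpace γ] {B : Set (Set γ)}
    (hB : TopologicalSpace.IsTopologicalBasis B) {k : ℕ} (hk : 0 < k)
    {W : Set (Fin k → γ)} (hW : IsOpen W) {F : Set γ} (hF : F.Finite)
    (hFW : {f : Fin k → γ | ∀ i, f i ∈ F} ⊆ W) :
    ∃ S : Set (Set γ), S.Finite ∧ (∀ u ∈ S, ∃ T : Set (Set γ), T.Finite ∧ T ⊆ B ∧ u = ⋂₀ T) ∧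
      F ⊆ ⋃₀ S ∧ {f : Fin k → γ | ∀ i, f i ∈ ⋃₀ S} ⊆ W := by
  rcases F.eq_empty_or_nonempty with rfl | hFne
  · refine ⟨∅, finite_empty, by simp, by simp, ?_⟩
    intro f hf
    exact absurd (hf ⟨0, hk⟩) (by simp)
  · set FP : Set (Fin k → γ) := {f | ∀ i, f i ∈ F} with hFP
    have hFPfin : FP.Finite := by
      have : FP = Set.pi univ (fun _ => F) := by
        ext f; simp [hFP, Set.mem_pi]
      rw [this]
      exact Set.Finite.pi (fun _ => hF)
    -- for each f in FP choose basic boxes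
    have key : ∀ f : Fin k → γ, ∃ b : Fin k → Set γ, f ∈ FP →
        (∀ i, b i ∈ B ∧ f i ∈ b i) ∧ {g : Fin k → γ | ∀ i, g i ∈ b i} ⊆ W := by
      intro f
      by_cases hf : f ∈ FP
      · obtain ⟨I, u, hu, hsub⟩ := isOpen_pi_iff.1 hW f (hFW hf)
        have hbox : ∀ i : Fin k, ∃ b : Set γ, b ∈ B ∧ f i ∈ b ∧
            b ⊆ (if i ∈ I then u i else univ) := by
          intro i
          by_cases hi : i ∈ I
          · obtain ⟨b, hbB, hfb, hbu⟩ :=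
              hB.exists_subset_of_mem_open (hu i hi).2 (hu i hi).1
            exact ⟨b, hbB, hfb, by simp [hi, hbu]⟩
          · obtain ⟨b, hbB, hfb⟩ := hB.exists_subset_of_mem_open (mem_univ (f i)) isOpen_univ
            exact ⟨b, hbB, hfb.1, by simp [hi]⟩
        choose b hbB hfb hbu using hbox
        refine ⟨b, fun _ => ⟨fun i => ⟨hbB i, hfb i⟩, ?_⟩⟩
        intro g hg
        apply hsub
        intro i hi
        have := hbu i (hg i)
        rwa [if_pos (Finset.mem_coe.1 hi)] at this
      · exact ⟨fun _ => ∅, fun h => absurd h hf⟩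
    choose bb hbb using key
    -- for x in F the finite intersection
    set Tx : γ → Set (Set γ) := fun x =>
      (fun p : (Fin k → γ) × Fin k => bb p.1 p.2) '' {p | p.1 ∈ FP ∧ p.1 p.2 = x} with hTx
    have hTxfin : ∀ x, (Tx x).Finite := by
      intro x
      apply Set.Finite.image
      exact (hFPfin.prod (finite_univ)).subset (fun p hp => ⟨hp.1, mem_univ _⟩)
    refine ⟨(fun x => ⋂₀ Tx x) '' F, hF.image _, ?_, ?_, ?_⟩
    · rintro u ⟨x, hx, rfl⟩
      refine ⟨Tx x, hTxfin x, ?_, rfl⟩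
      rintro t ⟨⟨f, i⟩, ⟨hfFP, hfix⟩, rfl⟩
      exact ((hbb f hfFP).1 i).1
    · intro x hx
      refine ⟨⋂₀ Tx x, ⟨x, hx, rfl⟩, ?_⟩
      rintro t ⟨⟨f, i⟩, ⟨hfFP, hfix⟩, rfl⟩
      rw [← hfix]
      exact ((hbb f hfFP).1 i).2
    · intro g hg
      have : ∀ i : Fin k, ∃ x ∈ F, g i ∈ ⋂₀ Tx x := by
        intro i
        obtain ⟨u, ⟨x, hx, rfl⟩, hgu⟩ := hg i
        exact ⟨x, hx, hgu⟩
      choose x hxF hgx using this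
      have hxFP : x ∈ FP := hxF
      refine (hbb x hxFP).2 ?_
      intro i
      exact (Set.mem_sInter.1 (hgx i)) _ ⟨(x, i), ⟨hxFP, rfl⟩, rfl⟩


/-- the transfer lemma: push a τ*-cover of `γ` through a refinement into a
family of subsets of the power -/
lemma transfer {γ : Type} {k : ℕ} (hk : 0 < k)
    {𝒮 : Set (Set (Fin k → γ))} (hSc : 𝒮.Countable) (hSuniv : univ ∉ 𝒮)
    {𝒰X : Set (Set γ)} (hTS : IsTauStarCover 𝒰X)
    {Φ : Set γ → Set (Fin k → γ)} (hΦmem : ∀ U ∈ 𝒰X, Φ U ∈ 𝒮)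
    (hΦsub : ∀ U ∈ 𝒰X, powSet k U ⊆ Φ U)
    (hΦfib : ∀ W, {U | U ∈ 𝒰X ∧ Φ U = W}.Finite) :
    IsTauStarCover 𝒮 := by
  classical
  haveI : Nonempty (Fin k) := ⟨⟨0, hk⟩⟩
  have hωX := tauStar_omega hTS
  -- 𝒮 is an ω-cover of the power
  have homega : ∀ F₀ : Set (Fin k → γ), F₀.Finite → ∃ W ∈ 𝒮, F₀ ⊆ W := by
    intro F₀ hF₀
    have hcoord : (⋃ z ∈ F₀, Set.range z).Finite :=
      hF₀.biUnion (fun z _ => Set.finite_range z)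
    obtain ⟨U, hU, hsub⟩ := hωX.2 _ hcoord
    refine ⟨Φ U, hΦmem U hU, fun z hz => hΦsub U hU ?_⟩
    intro i
    exact hsub (Set.mem_biUnion hz ⟨i, rfl⟩)
  have hcov : IsCover 𝒮 := by
    constructor
    · apply Set.eq_univ_of_forall
      intro z
      obtain ⟨W, hW, hzW⟩ := homega {z} (Set.finite_singleton z)
      exact ⟨W, hW, hzW rfl⟩
    · exact hSuniv
  have hωS : IsOmegaCover 𝒮 := ⟨hcov, homega⟩
  obtain ⟨T, hTinj, hTrange⟩ := exists_inj_enum hSc (omega_inf hωS)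
  obtain ⟨hlarge, U', hU'inj, hU'range, r, hr1, hr2⟩ := hTS
  -- minimal coordinate
  have hmin : ∀ z : Fin k → γ, ∃ i : Fin k, ∀ j : Fin k,
      AlmostSubset (r (z i)) (r (z j)) := by
    intro z
    obtain ⟨i, _, hmin⟩ := chain_min (f := fun i : Fin k => r (z i))
      (fun i j => hr2 (z i) (z j)) Finset.univ Finset.univ_nonempty
    exact ⟨i, fun j => hmin j (Finset.mem_univ j)⟩
  choose istar histar using hmin
  set a : (Fin k → γ) → Set ℕ := fun z =>
    r (z (istar z)) \ ⋃ i : Fin k, (r (z (istar z)) \ r (z i)) with ha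
  have ha_inf : ∀ z, (a z).Infinite := by
    intro z
    exact (hr1 (z (istar z))).1.diff (Set.finite_iUnion (fun i => histar z i))
  have ha_sub : ∀ z i, a z ⊆ r (z i) := by
    intro z i n hn
    by_contra hni
    exact hn.2 (Set.mem_iUnion.2 ⟨i, hn.1, hni⟩)
  have ha_as : ∀ z w : Fin k → γ,
      AlmostSubset (r (z (istar z))) (r (w (istar w))) → AlmostSubset (a z) (a w) := by
    intro z w hzw
    have h1 : r (w (istar w)) \ a w ⊆ ⋃ i : Fin k, (r (w (istar w)) \ r (w i)) := by
      intro n hn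
      by_contra hni
      exact hn.2 ⟨hn.1, hni⟩
    have h2 : a z \ a w ⊆ (r (z (istar z)) \ r (w (istar w))) ∪ (r (w (istar w)) \ a w) := by
      intro n hn
      by_cases hnw : n ∈ r (w (istar w))
      · exact Or.inr ⟨hnw, hn.2⟩
      · exact Or.inl ⟨hn.1.1, hnw⟩
    exact (hzw.union ((Set.finite_iUnion (fun i => histar w i)).subset h1)).subset h2
  -- the index transfer map
  have hsig : ∀ n : ℕ, ∃ p : ℕ, T p = Φ (U' n) := by
    intro n
    have : Φ (U' n) ∈ 𝒮 := hΦmem _ (hU'range ▸ ⟨n, rfl⟩)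
    rw [← hTrange] at this
    exact this
  choose σ hσ using hsig
  have hσfib : ∀ p, {n | σ n = p}.Finite := by
    intro p
    have hsub : {n | σ n = p} ⊆ U' ⁻¹' {U | U ∈ 𝒰X ∧ Φ U = T p} := by
      intro n hn
      exact ⟨hU'range ▸ ⟨n, rfl⟩, by rw [← hσ n, hn]⟩
    exact ((hΦfib (T p)).preimage hU'inj.injOn).subset hsub
  refine ⟨omega_large hωS, T, hTinj, hTrange, fun z => σ '' a z, fun z => ?_, fun z w => ?_⟩
  · constructor
    · exact fto_image_infinite (ha_inf z) hσfib
    · rintro p ⟨n, hn, rfl⟩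
      show z ∈ T (σ n)
      rw [hσ n]
      apply hΦsub _ (hU'range ▸ ⟨n, rfl⟩)
      intro i
      exact (hr1 (z i)).2 (ha_sub z i hn)
  · rcases hr2 (z (istar z)) (w (istar w)) with hc | hc
    · exact Or.inl (AS_image (ha_as z w hc))
    · exact Or.inr (AS_image (ha_as w z hc))

/-- the derived ω-cover on `γ` from an ω-cover of a finite power -/
lemma derived_mem_openOmega {γ : Type} [TopologicalSpace γ]
    [SecondCountableTopology γ] {k : ℕ} (hk : 0 < k)
    {𝒲 : Set (Set (Fin k → γ))} (h𝒲 : 𝒲 ∈ OpenOmega (Fin k → γ))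
    {G : ℕ → Set (Fin k → γ)} (hGinj : Function.Injective G) (hGr : 𝒲 ⊆ range G) (m : ℕ) :
    {U | U ∈ basicUnions (TopologicalSpace.countableBasis γ) ∧
      ∃ t, m ≤ t ∧ G t ∈ 𝒲 ∧ powSet k U ⊆ G t} ∈ OpenOmega γ := by
  obtain ⟨h𝒲c, h𝒲o, h𝒲ω⟩ := h𝒲
  have hBbasis := TopologicalSpace.isBasis_countableBasis γ
  have homegaa : ∀ F : Set γ, F.Finite →
      ∃ U, (U ∈ basicUnions (TopologicalSpace.countableBasis γ) ∧
        ∃ t, m ≤ t ∧ G t ∈ 𝒲 ∧ powSet k U ⊆ G t) ∧ F ⊆ U := by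
    intro F hF
    have hS : {W ∈ 𝒲 | powSet k F ⊆ W}.Infinite := omega_infinite h𝒲ω (powSet_finite hF)
    have hTinf : {t : ℕ | G t ∈ {W ∈ 𝒲 | powSet k F ⊆ W}}.Infinite := by
      by_contra hfin
      rw [Set.not_infinite] at hfin
      apply hS
      have : {W ∈ 𝒲 | powSet k F ⊆ W} ⊆ G '' {t | G t ∈ {W ∈ 𝒲 | powSet k F ⊆ W}} := by
        intro W hW
        obtain ⟨t, rfl⟩ := hGr hW.1
        exact ⟨t, hW, rfl⟩
      exact (hfin.image G).subset this
    obtain ⟨t, htmem, htm⟩ := hTinf.exists_gt m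
    obtain ⟨S, hSfin, hSdesc, hFS, hsub⟩ := tube hBbasis hk (h𝒲o _ htmem.1) hF htmem.2
    exact ⟨⋃₀ S, ⟨⟨S, hSfin, hSdesc, rfl⟩, t, le_of_lt htm, htmem.1, hsub⟩, hFS⟩
  refine ⟨?_, ?_, ⟨?_, ?_⟩, ?_⟩
  · exact (basicUnions_countable (TopologicalSpace.countable_countableBasis γ)).mono
      (fun U hU => hU.1)
  · intro U hU
    exact basicUnions_open
      (fun b hb => TopologicalSpace.isOpen_of_mem_countableBasis hb) hU.1
  · apply Set.eq_univ_of_forall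
    intro x
    obtain ⟨U, hU, hxU⟩ := homegaa {x} (Set.finite_singleton x)
    exact ⟨U, hU, hxU rfl⟩
  · rintro ⟨-, t, -, htW, hsub⟩
    rw [powSet_univ] at hsub
    exact h𝒲ω.1.2 ((Set.univ_subset_iff.1 hsub) ▸ htW)
  · intro F hF
    obtain ⟨U, hU, hFU⟩ := homegaa F hF
    exact ⟨U, hU, hFU⟩


/-- S₁(Ω,T*) and Sfin(Ω,T*) are closed under taking finite powers: if `X`
satisfies the property, so does `X^k` with the product topology. -/
theorem statement19 (X : Set ℝ) (hX : X.Infinite) (k : ℕ) :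
    (S1 (OpenOmega ↥X) (OpenTauStar ↥X) →
      S1 (OpenOmega (Fin k → ↥X)) (OpenTauStar (Fin k → ↥X))) ∧
    (Sfin (OpenOmega ↥X) (OpenTauStar ↥X) →
      Sfin (OpenOmega (Fin k → ↥X)) (OpenTauStar (Fin k → ↥X))) := by
  classical
  rcases Nat.eq_zero_or_pos k with rfl | hk
  · -- the zero-th power is a singleton space admitting no ω-cover
    have hempty : ∀ 𝒰 : Set (Set (Fin 0 → ↥X)), 𝒰 ∉ OpenOmega (Fin 0 → ↥X) := by
      intro 𝒰 h𝒰
      haveI : Subsingleton (Fin 0 → ↥X) := ⟨fun a b => funext fun i => i.elim0⟩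
      haveI : Finite (Fin 0 → ↥X) := Finite.of_subsingleton
      obtain ⟨U, hU, hsub⟩ := h𝒰.2.2.2 univ Set.finite_univ
      exact h𝒰.2.2.1.2 ((Set.univ_subset_iff.1 hsub) ▸ hU)
    constructor
    · intro _ 𝒰 h𝒰; exact absurd (h𝒰 0) (hempty _)
    · intro _ 𝒰 h𝒰; exact absurd (h𝒰 0) (hempty _)
  constructor
  · -- the S₁ case
    intro hS1 𝒲 h𝒲
    have hUc : (⋃ m, 𝒲 m).Countable := Set.countable_iUnion (fun m => (h𝒲 m).1)
    have hUinf : (⋃ m, 𝒲 m).Infinite :=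
      (omega_inf (h𝒲 0).2.2).mono (Set.subset_iUnion 𝒲 0)
    obtain ⟨G, hGinj, hGrange⟩ := exists_inj_enum hUc hUinf
    have hGr : ∀ m, 𝒲 m ⊆ range G := fun m => hGrange ▸ Set.subset_iUnion 𝒲 m
    set 𝒱 : ℕ → Set (Set ↥X) := fun m =>
      {U | U ∈ basicUnions (TopologicalSpace.countableBasis ↥X) ∧
        ∃ t, m ≤ t ∧ G t ∈ 𝒲 m ∧ powSet k U ⊆ G t} with h𝒱def
    have h𝒱 : ∀ m, 𝒱 m ∈ OpenOmega ↥X := fun m =>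
      derived_mem_openOmega hk (h𝒲 m) hGinj (hGr m) m
    obtain ⟨V, hV, hVT⟩ := hS1 𝒱 h𝒱
    have hVm : ∀ m, ∃ t, m ≤ t ∧ G t ∈ 𝒲 m ∧ powSet k (V m) ⊆ G t := fun m => (hV m).2
    choose tm htm1 htm2 htm3 using hVm
    set Wsel : ℕ → Set (Fin k → ↥X) := fun m => G (tm m) with hWseldef
    set Φ : Set ↥X → Set (Fin k → ↥X) := fun U =>
      if h : ∃ m, V m = U then Wsel (Nat.find h) else ∅ with hΦdef
    refine ⟨Wsel, fun m => htm2 m, Set.countable_range Wsel, ?_, ?_⟩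
    · rintro W ⟨m, rfl⟩; exact (h𝒲 m).2.1 _ (htm2 m)
    · refine transfer hk (Set.countable_range Wsel) ?_ hVT.2.2 (Φ := Φ) ?_ ?_ ?_
      · rintro ⟨m, hm⟩
        exact (h𝒲 m).2.2.1.2 (hm ▸ htm2 m)
      · rintro U ⟨m, rfl⟩
        have h : ∃ m', V m' = V m := ⟨m, rfl⟩
        simp only [hΦdef, dif_pos h]
        exact ⟨Nat.find h, rfl⟩
      · rintro U ⟨m, rfl⟩
        have h : ∃ m', V m' = V m := ⟨m, rfl⟩
        simp only [hΦdef, dif_pos h]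
        have h3 := htm3 (Nat.find h)
        rw [Nat.find_spec h] at h3
        exact h3
      · intro W
        rcases Set.eq_empty_or_nonempty {U | U ∈ range V ∧ Φ U = W} with he | ⟨U₀, hU₀r, hU₀⟩
        · rw [he]; exact Set.finite_empty
        · obtain ⟨m₀, rfl⟩ := hU₀r
          have h₀ : ∃ m', V m' = V m₀ := ⟨m₀, rfl⟩
          have hW : W = Wsel (Nat.find h₀) := by
            rw [← hU₀]; simp only [hΦdef, dif_pos h₀]
          apply ((Set.finite_Iic (tm (Nat.find h₀))).image V).subset
          rintro U ⟨⟨m, rfl⟩, hΦU⟩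
          have h : ∃ m', V m' = V m := ⟨m, rfl⟩
          have hΦU' : Wsel (Nat.find h) = W := by
            rw [← hΦU]; simp only [hΦdef, dif_pos h]
          have hteq : tm (Nat.find h) = tm (Nat.find h₀) := by
            apply hGinj
            have := hΦU'.trans hW
            exact this
          refine ⟨Nat.find h, ?_, Nat.find_spec h⟩
          rw [Set.mem_Iic, ← hteq]
          exact htm1 _
  · -- the Sfin case
    intro hSf 𝒲 h𝒲
    have hUc : (⋃ m, 𝒲 m).Countable := Set.countable_iUnion (fun m => (h𝒲 m).1)
    have hUinf : (⋃ m, 𝒲 m).Infinite :=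
      (omega_inf (h𝒲 0).2.2).mono (Set.subset_iUnion 𝒲 0)
    obtain ⟨G, hGinj, hGrange⟩ := exists_inj_enum hUc hUinf
    have hGr : ∀ m, 𝒲 m ⊆ range G := fun m => hGrange ▸ Set.subset_iUnion 𝒲 m
    set 𝒱 : ℕ → Set (Set ↥X) := fun m =>
      {U | U ∈ basicUnions (TopologicalSpace.countableBasis ↥X) ∧
        ∃ t, m ≤ t ∧ G t ∈ 𝒲 m ∧ powSet k U ⊆ G t} with h𝒱def
    have h𝒱 : ∀ m, 𝒱 m ∈ OpenOmega ↥X := fun m =>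
      derived_mem_openOmega hk (h𝒲 m) hGinj (hGr m) m
    obtain ⟨Fs, hFs, hFsT⟩ := hSf 𝒱 h𝒱
    have hprop : ∀ U : Set ↥X, ∃ W : Set (Fin k → ↥X), (∃ m, U ∈ Fs m) →
        ∃ m t, U ∈ Fs m ∧ (∀ m' < m, U ∉ Fs m') ∧ m ≤ t ∧ G t ∈ 𝒲 m ∧
          powSet k U ⊆ G t ∧ W = G t := by
      intro U
      by_cases h : ∃ m, U ∈ Fs m
      · have hm : U ∈ Fs (Nat.find h) := Nat.find_spec h
        have hUV : U ∈ 𝒱 (Nat.find h) := (hFs (Nat.find h)).2 hm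
        obtain ⟨t, htm, htW, hsub⟩ := hUV.2
        exact ⟨G t, fun _ => ⟨Nat.find h, t, hm,
          fun m' hm' => Nat.find_min h hm', htm, htW, hsub, rfl⟩⟩
      · exact ⟨∅, fun h' => absurd h' h⟩
    choose Φ hΦ using hprop
    set F' : ℕ → Set (Set (Fin k → ↥X)) := fun m =>
      Φ '' {U | U ∈ Fs m ∧ ∀ m' < m, U ∉ Fs m'} with hF'def
    have hunion : (⋃ m, F' m) = Φ '' (⋃ m, Fs m) := by
      apply Set.Subset.antisymm
      · rintro W hW
        obtain ⟨m, hWm⟩ := Set.mem_iUnion.1 hW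
        obtain ⟨U, hU, rfl⟩ := hWm
        exact ⟨U, Set.mem_iUnion.2 ⟨m, hU.1⟩, rfl⟩
      · rintro W ⟨U, hU, rfl⟩
        have h : ∃ m, U ∈ Fs m := Set.mem_iUnion.1 hU
        refine Set.mem_iUnion.2 ⟨Nat.find h, ?_⟩
        exact ⟨U, ⟨Nat.find_spec h, fun m' hm' => Nat.find_min h hm'⟩, rfl⟩
    have hmemW : ∀ U, (∃ m, U ∈ Fs m) → ∃ m t, m ≤ t ∧ G t ∈ 𝒲 m ∧
        powSet k U ⊆ G t ∧ Φ U = G t := by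
      intro U h
      obtain ⟨m, t, _, _, htm, htW, hsub, hWt⟩ := hΦ U h
      exact ⟨m, t, htm, htW, hsub, hWt⟩
    refine ⟨F', fun m => ⟨?_, ?_⟩, ?_⟩
    · exact ((hFs m).1.subset (fun U hU => hU.1)).image Φ
    · -- F' m ⊆ 𝒲 m
      rintro W ⟨U, ⟨hUm, hUmin⟩, rfl⟩
      obtain ⟨m', t, hm', hmin', htm, htW, hsub, hWt⟩ := hΦ U ⟨m, hUm⟩
      have hmm : m' = m := by
        rcases Nat.lt_trichotomy m m' with h1 | h1 | h1
        · exact absurd hUm (hmin' m h1)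
        · exact h1.symm
        · exact absurd hm' (hUmin m' h1)
      rw [hWt, ← hmm]
      exact htW
    · rw [hunion]
      have hcnt : (Φ '' (⋃ m, Fs m)).Countable :=
        (Set.countable_iUnion (fun m => (hFs m).1.countable)).image Φ
      refine ⟨hcnt, ?_, ?_⟩
      · rintro W ⟨U, hU, rfl⟩
        obtain ⟨m, t, _, htW, _, hWt⟩ := hmemW U (Set.mem_iUnion.1 hU)
        rw [hWt]
        exact (h𝒲 m).2.1 _ htW
      · refine transfer hk hcnt ?_ hFsT.2.2 (Φ := Φ) ?_ ?_ ?_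
        · rintro ⟨U, hU, hUuniv⟩
          obtain ⟨m, t, _, htW, _, hWt⟩ := hmemW U (Set.mem_iUnion.1 hU)
          exact (h𝒲 m).2.2.1.2 ((hUuniv.symm.trans hWt) ▸ htW)
        · intro U hU
          exact Set.mem_image_of_mem Φ hU
        · intro U hU
          obtain ⟨m, t, _, _, hsub, hWt⟩ := hmemW U (Set.mem_iUnion.1 hU)
          rw [hWt]
          exact hsub
        · intro W
          rcases Set.eq_empty_or_nonempty {U | U ∈ ⋃ m, Fs m ∧ Φ U = W} with he | ⟨U₀, hU₀r, hU₀⟩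
          · rw [he]; exact Set.finite_empty
          · obtain ⟨m₀, t₀, _, _, _, hWt₀⟩ := hmemW U₀ (Set.mem_iUnion.1 hU₀r)
            have hW : W = G t₀ := hU₀ ▸ hWt₀
            apply (Set.Finite.biUnion (Set.finite_Iic t₀) (fun m _ => (hFs m).1)).subset
            rintro U ⟨hUmem, hΦU⟩
            obtain ⟨m, t, hUFm, _, htm, _, _, hWt⟩ := hΦ U (Set.mem_iUnion.1 hUmem)
            have hteq : t = t₀ := hGinj (by rw [← hWt, hΦU, hW])
            exact Set.mem_biUnion (Set.mem_Iic.2 (hteq ▸ htm)) hUFm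

end TauCoverPaper
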